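/- Suppose 0 < 1/n ≪ δ < 1 (i.e., n is sufficiently large relative to δ). Let G be an n-vertex multigraph with d·C(n,2) edges, and let B ⊆ V(G) be a vertex set with |B| = δn/2 such that every v ∈ B satisfies d_G(v) < (1-δ)·d·n. Then the multigraph G - B has at least (1 + δ²/2)·d·C(|V(G)|-|B|, 2) edges. -/

import Mathlib

open scoped Classical in
/-- Observation 5.1 (ob:G-B). -/
theorem stmt_10 (δ : ℝ) (hδ0 : 0 < δ) (hδ1 : δ < 1) :
    ∃ n₀ : ℕ, ∀ n : ℕ, n₀ ≤ n →
      ∀ w : Sym2 (Fin n) → ℕ, (∀ v : Fin n, w s(v, v) = 0) →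
      ∀ d : ℝ,
        (∑ e ∈ (Finset.univ : Finset (Sym2 (Fin n))).filter (fun e => ¬ e.IsDiag),
            (w e : ℝ)) = d * (n.choose 2) →
      ∀ B : Finset (Fin n), (B.card : ℝ) = δ * n / 2 →
        (∀ v ∈ B, (∑ u : Fin n, (w s(v, u) : ℝ)) < (1 - δ) * d * n) →
        (1 + δ ^ 2 / 2) * d * ((n - B.card).choose 2) ≤
          ∑ e ∈ (Finset.univ : Finset (Sym2 (Fin n))).filter
              (fun e => ¬ e.IsDiag ∧ ∀ v ∈ B, ¬ v ∈ e), (w e : ℝ) := by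
  refine ⟨⌈(8:ℝ)/δ^2⌉₊ + 2, ?_⟩
  intro n hn w hw d hd B hB hdeg
  have hn2 : 2 ≤ n := by omega
  have hnpos : (0:ℝ) < n := by
    have : (0:ℕ) < n := by omega
    exact_mod_cast this
  have hN : (8:ℝ)/δ^2 ≤ n := by
    have h1 : (8:ℝ)/δ^2 ≤ (⌈(8:ℝ)/δ^2⌉₊ : ℝ) := Nat.le_ceil _
    have h2 : (⌈(8:ℝ)/δ^2⌉₊ : ℕ) ≤ n := by omega
    have h2' : ((⌈(8:ℝ)/δ^2⌉₊ : ℕ) : ℝ) ≤ (n:ℝ) := by exact_mod_cast h2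
    linarith
  -- d ≥ 0
  have hchoosen : ((n.choose 2 : ℕ) : ℝ) = (n:ℝ) * ((n:ℝ) - 1) / 2 :=
    Nat.cast_choose_two ℝ n
  have hSall_nonneg : (0:ℝ) ≤ ∑ e ∈ (Finset.univ : Finset (Sym2 (Fin n))).filter
      (fun e => ¬ e.IsDiag), (w e : ℝ) :=
    Finset.sum_nonneg fun e _ => by positivity
  have hn2' : (2:ℝ) ≤ (n:ℝ) := by exact_mod_cast hn2
  have hd0 : 0 ≤ d := by
    by_contra h
    push_neg at h
    have hc : (0:ℝ) < (n:ℝ) * ((n:ℝ) - 1) / 2 := by nlinarith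
    nlinarith [hd, hSall_nonneg, hchoosen]
  -- split the total edge sum
  set Pd : Sym2 (Fin n) → Prop := fun e => ¬ e.IsDiag with hPd
  set Q : Sym2 (Fin n) → Prop := fun e => ∀ v ∈ B, ¬ v ∈ e with hQ
  have hsplit :
      (∑ e ∈ (Finset.univ : Finset (Sym2 (Fin n))).filter (fun e => ¬ e.IsDiag), (w e : ℝ)) =
      (∑ e ∈ (Finset.univ : Finset (Sym2 (Fin n))).filter
          (fun e => ¬ e.IsDiag ∧ ∀ v ∈ B, ¬ v ∈ e), (w e : ℝ)) +
      (∑ e ∈ ((Finset.univ : Finset (Sym2 (Fin n))).filter (fun e => ¬ e.IsDiag)).filter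
          (fun e => ¬ (∀ v ∈ B, ¬ v ∈ e)), (w e : ℝ)) := by
    rw [← Finset.sum_filter_add_sum_filter_not
      ((Finset.univ : Finset (Sym2 (Fin n))).filter (fun e => ¬ e.IsDiag))
      (fun e => ∀ v ∈ B, ¬ v ∈ e)]
    rw [Finset.filter_filter]
  set A : Finset (Sym2 (Fin n)) :=
    ((Finset.univ : Finset (Sym2 (Fin n))).filter (fun e => ¬ e.IsDiag)).filter
      (fun e => ¬ (∀ v ∈ B, ¬ v ∈ e)) with hA
  -- bound the inner sum by degree sums
  have hv0 : Nonempty (Fin n) := ⟨⟨0, by omega⟩⟩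
  obtain ⟨v0⟩ := hv0
  set g : Sym2 (Fin n) → Fin n × Fin n := fun e =>
    if h : ∃ p : Fin n × Fin n, p.1 ∈ B ∧ s(p.1, p.2) = e then h.choose else (v0, v0) with hg
  have hgspec : ∀ e ∈ A, (g e).1 ∈ B ∧ s((g e).1, (g e).2) = e := by
    intro e he
    rw [hA, Finset.mem_filter] at he
    obtain ⟨_, hne⟩ := he
    push_neg at hne
    obtain ⟨v, hvB, hve⟩ := hne
    obtain ⟨u, hu⟩ := Sym2.mem_iff_exists.mp hve
    have hex : ∃ p : Fin n × Fin n, p.1 ∈ B ∧ s(p.1, p.2) = e := ⟨(v, u), hvB, hu.symm⟩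
    rw [hg]
    simp only [dif_pos hex]
    exact hex.choose_spec
  have hginj : Set.InjOn g A := by
    intro e₁ h₁ e₂ h₂ hgeq
    have s₁ := (hgspec e₁ h₁).2
    have s₂ := (hgspec e₂ h₂).2
    rw [← s₁, ← s₂, hgeq]
  have hTbound :
      (∑ e ∈ A, (w e : ℝ)) ≤ ∑ v ∈ B, ∑ u : Fin n, (w s(v, u) : ℝ) := by
    have himg : ∑ e ∈ A, (w e : ℝ) = ∑ p ∈ A.image g, (w s(p.1, p.2) : ℝ) := by
      rw [Finset.sum_image (fun a ha b hb => hginj ha hb)]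
      refine Finset.sum_congr rfl fun e he => ?_
      rw [(hgspec e he).2]
    rw [himg, ← Finset.sum_product']
    apply Finset.sum_le_sum_of_subset_of_nonneg
    · intro p hp
      obtain ⟨e, he, hpe⟩ := Finset.mem_image.mp hp
      rw [Finset.mem_product]
      exact ⟨hpe ▸ (hgspec e he).1, Finset.mem_univ _⟩
    · intro p _ _
      positivity
  have hdegsum : (∑ v ∈ B, ∑ u : Fin n, (w s(v, u) : ℝ)) ≤ (B.card : ℝ) * ((1 - δ) * d * n) := by
    calc (∑ v ∈ B, ∑ u : Fin n, (w s(v, u) : ℝ))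
        ≤ ∑ _v ∈ B, (1 - δ) * d * (n:ℝ) := Finset.sum_le_sum fun v hv => (hdeg v hv).le
      _ = (B.card : ℝ) * ((1 - δ) * d * n) := by rw [Finset.sum_const, nsmul_eq_mul]
  -- cardinality facts
  have hbn : B.card ≤ n := by
    calc B.card ≤ Finset.univ.card := Finset.card_le_card (Finset.subset_univ B)
      _ = n := Finset.card_univ.trans (Fintype.card_fin n)
  have hm : ((n - B.card : ℕ) : ℝ) = (n:ℝ) - (B.card : ℝ) := by
    rw [Nat.cast_sub hbn]
  have hchoosem : (((n - B.card).choose 2 : ℕ) : ℝ)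
      = ((n:ℝ) - (B.card:ℝ)) * (((n:ℝ) - (B.card:ℝ)) - 1) / 2 := by
    rw [Nat.cast_choose_two ℝ, hm]
  -- the purely numeric inequality
  have hkey : (1 + δ ^ 2 / 2) * (((n:ℝ) - (B.card:ℝ)) * (((n:ℝ) - (B.card:ℝ)) - 1) / 2)
      ≤ (n:ℝ) * ((n:ℝ) - 1) / 2 - (B.card:ℝ) * ((1 - δ) * (n:ℝ)) := by
    rw [hB]
    have hδ2 : 0 < δ^2 := by positivity
    have h8 : 8 ≤ δ^2 * (n:ℝ) := by
      rw [div_le_iff₀ hδ2] at hN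
      linarith
    nlinarith [sq_nonneg ((n:ℝ) * δ), sq_nonneg (n:ℝ), mul_pos hnpos hnpos,
      sq_nonneg (δ * (1-δ)), mul_nonneg (mul_nonneg hδ0.le hδ0.le) hnpos.le,
      mul_nonneg (mul_nonneg (mul_nonneg hδ0.le hδ0.le) hδ0.le) (mul_pos hnpos hnpos).le]
  -- combine
  have hmain : (1 + δ ^ 2 / 2) * d * (((n - B.card).choose 2 : ℕ) : ℝ)
      ≤ d * ((n.choose 2 : ℕ) : ℝ) - (B.card : ℝ) * ((1 - δ) * d * (n:ℝ)) := by
    rw [hchoosem, hchoosen]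
    have := mul_le_mul_of_nonneg_left hkey hd0
    ring_nf
    ring_nf at this
    linarith
  rw [hd] at hsplit
  linarith [hTbound.trans hdegsum]
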